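/- Fix positive integers p, q, r with 1/p + 1/q + 1/r > 1, and let I, J be sets of nonnegative real numbers satisfying the descending chain condition with 0 ∉ J. Then the set LCT_{1,(p,q,r)}(I,J) := {(qr + pr + pq − pqr − i)/j | i ∈ I^+_{(p,q,r)}, j ∈ J^+_{(p,q,r)}, j > 0, and the value is ≥ 0} satisfies the ascending chain condition. -/

import Mathlib

/-- A set of reals satisfies the descending chain condition if it contains
no infinite strictly decreasing sequence. -/
def DCC (S : Set ℝ) : Prop := ¬ ∃ f : ℕ → ℝ, (∀ n, f n ∈ S) ∧ StrictAnti f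

/-- A set of reals satisfies the ascending chain condition if it contains
no infinite strictly increasing sequence. -/
def ACC (S : Set ℝ) : Prop := ¬ ∃ f : ℕ → ℝ, (∀ n, f n ∈ S) ∧ StrictMono f

/-- `I⁺ = {0} ∪ {x ∈ [0,1] | x is a finite (nonempty) sum of elements of I}`. -/
def plusSet (I : Set ℝ) : Set ℝ :=
  {0} ∪ {x | 0 ≤ x ∧ x ≤ 1 ∧ ∃ l : List ℝ, l ≠ [] ∧ (∀ j ∈ l, j ∈ I) ∧ l.sum = x}

/-- `D(I) = {a ≤ 1 | a = (m - 1 + f)/m, m ∈ ℤ_{>0}, f ∈ I⁺}`. -/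
def DSet (I : Set ℝ) : Set ℝ :=
  {a | a ≤ 1 ∧ ∃ m : ℕ, 0 < m ∧ ∃ f ∈ plusSet I, a = ((m : ℝ) - 1 + f) / m}

/-- `D_d(I) = {a ≤ 1 | a = (m - 1 + f + k·d)/m, k, m ∈ ℤ_{>0}, f ∈ I⁺}`. -/
def DdSet (d : ℝ) (I : Set ℝ) : Set ℝ :=
  {a | a ≤ 1 ∧ ∃ k m : ℕ, 0 < k ∧ 0 < m ∧ ∃ f ∈ plusSet I,
    a = ((m : ℝ) - 1 + f + (k : ℝ) * d) / m}

/-- `S⁺_{(p,q,r)} = {qr·s₁ + pr·s₂ + pq·s₃ | s₁, s₂, s₃ ∈ S⁺}`. -/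
def plusSetPQR (p q r : ℕ) (S : Set ℝ) : Set ℝ :=
  {x | ∃ s₁ ∈ plusSet S, ∃ s₂ ∈ plusSet S, ∃ s₃ ∈ plusSet S,
    x = (q : ℝ) * r * s₁ + (p : ℝ) * r * s₂ + (p : ℝ) * q * s₃}


/-- DCC (no strictly decreasing sequence) implies well-foundedness under `<`. -/
lemma dcc_isWF {S : Set ℝ} (h : ¬ ∃ f : ℕ → ℝ, (∀ n, f n ∈ S) ∧ StrictAnti f) :
    S.IsWF := by
  rw [Set.isWF_iff_no_descending_seq]
  intro f hf hmem
  exact h ⟨f, fun n => hmem n, hf⟩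

lemma plusSet_subset_closure (S : Set ℝ) :
    plusSet S ⊆ (AddSubmonoid.closure S : Set ℝ) := by
  rintro x (rfl | ⟨-, -, l, -, hl, rfl⟩)
  · exact (AddSubmonoid.closure S).zero_mem
  · exact AddSubmonoid.list_sum_mem _ fun y hy => AddSubmonoid.subset_closure (hl y hy)

lemma plusSetPQR_subset_closure (p q r : ℕ) (S : Set ℝ) :
    plusSetPQR p q r S ⊆ (AddSubmonoid.closure S : Set ℝ) := by
  rintro x ⟨s₁, h₁, s₂, h₂, s₃, h₃, rfl⟩
  have m : ∀ (a b : ℕ) (s : ℝ), s ∈ plusSet S →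
      (a : ℝ) * b * s ∈ (AddSubmonoid.closure S : Set ℝ) := by
    intro a b s hs
    have := AddSubmonoid.nsmul_mem (AddSubmonoid.closure S)
      (plusSet_subset_closure S hs) (a * b)
    simpa [nsmul_eq_mul, mul_assoc] using this
  exact AddSubmonoid.add_mem _ (AddSubmonoid.add_mem _ (m q r s₁ h₁) (m p r s₂ h₂)) (m p q s₃ h₃)

lemma closure_isPWO {S : Set ℝ} (hS : ∀ x ∈ S, 0 ≤ x)
    (h : ¬ ∃ f : ℕ → ℝ, (∀ n, f n ∈ S) ∧ StrictAnti f) :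
    (AddSubmonoid.closure S : Set ℝ).IsPWO :=
  Set.IsPWO.addSubmonoid_closure hS (dcc_isWF h).isPWO

theorem lct_coreg_one_pqr_ACC (p q r : ℕ) (hp : 0 < p) (hq : 0 < q) (hr : 0 < r)
    (hpqr : 1 < (1 : ℝ) / p + 1 / q + 1 / r)
    (I J : Set ℝ) (hI : ∀ x ∈ I, 0 ≤ x) (hJ : ∀ x ∈ J, 0 ≤ x)
    (hIdcc : DCC I) (hJdcc : DCC J) (hJ0 : (0:ℝ) ∉ J) :
    ACC {t : ℝ | 0 ≤ t ∧ ∃ i ∈ plusSetPQR p q r I, ∃ j ∈ plusSetPQR p q r J,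
      0 < j ∧ t = ((q : ℝ) * r + (p : ℝ) * r + (p : ℝ) * q
        - (p : ℝ) * q * r - i) / j} := by
  rintro ⟨f, hmem, hmono⟩
  set C : ℝ := (q : ℝ) * r + (p : ℝ) * r + (p : ℝ) * q - (p : ℝ) * q * r with hC
  -- the shifted sequence is strictly positive
  have ht : ∀ n : ℕ, 0 < f (n + 1) := fun n =>
    lt_of_le_of_lt (hmem 0).1 (hmono (Nat.succ_pos n))
  have hex : ∀ n : ℕ, ∃ i ∈ plusSetPQR p q r I, ∃ j ∈ plusSetPQR p q r J,
      0 < j ∧ f (n + 1) = (C - i) / j := fun n => (hmem (n + 1)).2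
  choose i hiI j hjJ hjpos hfij using hex
  -- numerators
  have hnum : ∀ n, C - i n = f (n + 1) * j n := by
    intro n
    rw [hfij n, div_mul_cancel₀ _ (hjpos n).ne']
  have hnumpos : ∀ n, 0 < C - i n := by
    intro n
    rw [hnum n]
    exact mul_pos (ht n) (hjpos n)
  -- extract a monotone subsequence of the numerators via PWO of closure of I
  have hIpwo := closure_isPWO hI hIdcc
  obtain ⟨g, hg⟩ := hIpwo.exists_monotone_subseq (f := i)
    (fun n => plusSetPQR_subset_closure p q r I (hiI n))
  -- along this subsequence, j is strictly decreasing
  have hjanti : StrictAnti (fun n => j (g n)) := by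
    intro m n hmn
    show j (g n) < j (g m)
    have htm : 0 < f (g m + 1) := ht (g m)
    have htn : 0 < f (g n + 1) := ht (g n)
    have htlt : f (g m + 1) < f (g n + 1) := by
      have : (g m : ℕ) < g n := g.strictMono hmn
      exact hmono (by omega)
    have hile : i (g m) ≤ i (g n) := hg (le_of_lt hmn)
    have h1 : j (g n) = (C - i (g n)) / f (g n + 1) := by
      rw [hnum (g n)]; field_simp
    have h2 : j (g m) = (C - i (g m)) / f (g m + 1) := by
      rw [hnum (g m)]; field_simp
    rw [h1, h2]
    calc (C - i (g n)) / f (g n + 1) ≤ (C - i (g m)) / f (g n + 1) :=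
          (div_le_div_iff_of_pos_right htn).mpr (by linarith)
      _ < (C - i (g m)) / f (g m + 1) :=
          div_lt_div_of_pos_left (hnumpos (g m)) htm htlt
  have hJwf := (closure_isPWO hJ hJdcc).isWF
  rw [Set.isWF_iff_no_descending_seq] at hJwf
  exact hJwf _ hjanti fun n => plusSetPQR_subset_closure p q r J (hjJ _)
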